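/- arXiv:2408.00721 — 6 statements merged into one kernel-verified Lean document; each statement's English description precedes it below -/
import Mathlib

section
/- Let (q_n) be an enumeration of the positive rationals and P_n(z) = z^n (z - q_n)^n. Then for every real r > 0 there is a strictly increasing sequence (n_k) with |P_{n_k}(r)| → 0 as k → ∞; hence the sequence (P_n) does not satisfy: there exists r > 0 with min_{|z|=r} |P_n(z)| → +∞. -/
open Filter

private lemma key_infinite (q : ℕ → ℚ) (hq_surj : ∀ s : ℚ, 0 < s → ∃ n, q n = s)
    (r : ℝ) (hr : 0 < r) :
    {n : ℕ | r * |r - (q n : ℝ)| ≤ 1/2}.Infinite := by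
  set δ : ℝ := min (r/2) (1/(2*r+2)) with hδdef
  have hδpos : 0 < δ := lt_min (by positivity) (by positivity)
  -- pick rationals in disjoint intervals
  have hpick : ∀ k : ℕ, ∃ s : ℚ, (r - δ/2^k : ℝ) < s ∧ (s : ℝ) < r - δ/2^(k+1) := by
    intro k
    apply exists_rat_btwn
    have : δ/2^(k+1) < δ/2^k := by
      apply div_lt_div_of_pos_left hδpos (by positivity)
      exact pow_lt_pow_right₀ one_lt_two (Nat.lt_succ_self k)
    linarith
  choose g hg1 hg2 using hpick
  have hglt : ∀ k, (g k : ℝ) < r := by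
    intro k
    have := hg2 k
    have : (0:ℝ) < δ/2^(k+1) := by positivity
    linarith [hg2 k]
  have hgpos : ∀ k, 0 < g k := by
    intro k
    have h1 : δ/2^k ≤ δ := by
      apply div_le_self hδpos.le
      exact one_le_pow₀ one_le_two
    have h2 : δ ≤ r/2 := min_le_left _ _
    have : (0:ℝ) < g k := by linarith [hg1 k]
    exact_mod_cast this
  have hgmono : StrictMono g := by
    apply strictMono_nat_of_lt_succ
    intro k
    have : (g k : ℝ) < g (k+1) := lt_trans (hg2 k) (hg1 (k+1))
    exact_mod_cast this
  choose f hf using hq_surj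
  apply Set.infinite_of_injective_forall_mem
    (f := fun k => f (g k) (hgpos k))
  case hi =>
    intro a b hab
    have hab' : f (g a) (hgpos a) = f (g b) (hgpos b) := hab
    have : g a = g b := by
      rw [← hf (g a) (hgpos a), ← hf (g b) (hgpos b), hab']
    exact hgmono.injective this
  case hf =>
    intro k
    simp only [Set.mem_setOf_eq, hf (g k) (hgpos k)]
    have h1 : δ/2^k ≤ δ := by
      apply div_le_self hδpos.le
      exact one_le_pow₀ one_le_two
    have h2 : δ ≤ 1/(2*r+2) := min_le_right _ _
    have habs : |r - (g k : ℝ)| < 1/(2*r+2) := by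
      rw [abs_of_pos (by linarith [hglt k])]
      linarith [hg1 k]
    have : r * |r - (g k : ℝ)| < r * (1/(2*r+2)) :=
      mul_lt_mul_of_pos_left habs hr
    have hlt : r * (1/(2*r+2)) < 1/2 := by
      rw [mul_one_div, div_lt_div_iff₀ (by linarith) (by norm_num : (0:ℝ) < 2)]
      linarith
    linarith

private lemma key_seq (q : ℕ → ℚ) (hq_surj : ∀ s : ℚ, 0 < s → ∃ n, q n = s)
    (r : ℝ) (hr : 0 < r) :
    ∃ nk : ℕ → ℕ, StrictMono nk ∧
      Tendsto (fun k : ℕ =>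
        ‖(r : ℂ) ^ (nk k) * ((r : ℂ) - (q (nk k) : ℂ)) ^ (nk k)‖)
        atTop (nhds 0) := by
  have hinf := key_infinite q hq_surj r hr
  set p : ℕ → Prop := fun n => r * |r - (q n : ℝ)| ≤ 1/2 with hp
  refine ⟨Nat.nth p, Nat.nth_strictMono hinf, ?_⟩
  have hmem : ∀ k, p (Nat.nth p k) := fun k => Nat.nth_mem_of_infinite hinf k
  apply squeeze_zero (g := fun k => (1/2 : ℝ)^k)
  · intro k; positivity
  · intro k
    set n := Nat.nth p k
    have habs : ‖(r : ℂ) ^ n * ((r : ℂ) - (q n : ℂ)) ^ n‖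
        = (r * |r - (q n : ℝ)|)^n := by
      rw [norm_mul, norm_pow, norm_pow, ← mul_pow]
      congr 2
      · rw [Complex.norm_real, Real.norm_eq_abs, abs_of_pos hr]
      · rw [show ((r:ℂ) - (q n : ℂ)) = ((r - (q n : ℝ) : ℝ) : ℂ) by push_cast; ring,
          Complex.norm_real, Real.norm_eq_abs]
    rw [habs]
    calc (r * |r - (q n : ℝ)|)^n ≤ (1/2 : ℝ)^n := by
          apply pow_le_pow_left₀ (by positivity) (hmem k)
      _ ≤ (1/2 : ℝ)^k := by
          apply pow_le_pow_of_le_one (by norm_num) (by norm_num)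
          exact (Nat.nth_strictMono hinf).le_apply
  · exact tendsto_pow_atTop_nhds_zero_of_lt_one (by norm_num) (by norm_num)

/-- If `(q n)` is an enumeration of the positive rationals and
`P_n(z) = z^n * (z - q n)^n`, then for every `r > 0` there is a strictly increasing
sequence `(n k)` with `|P_{n k}(r)| → 0`; hence there is no `r > 0` such that
`min_{|z| = r} |P_n(z)| → +∞`. -/
theorem stmt_4 (q : ℕ → ℚ) (hq_pos : ∀ n, 0 < q n)
    (hq_surj : ∀ s : ℚ, 0 < s → ∃ n, q n = s) :
    (∀ r : ℝ, 0 < r → ∃ nk : ℕ → ℕ, StrictMono nk ∧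
      Tendsto (fun k : ℕ =>
        ‖(r : ℂ) ^ (nk k) * ((r : ℂ) - (q (nk k) : ℂ)) ^ (nk k)‖)
        atTop (nhds 0)) ∧
    ¬ ∃ r : ℝ, 0 < r ∧
      Tendsto (fun n : ℕ =>
        sInf ((fun z : ℂ => ‖z ^ n * (z - (q n : ℂ)) ^ n‖) ''
          {z : ℂ | ‖z‖ = r})) atTop atTop := by
  constructor
  · exact fun r hr => key_seq q hq_surj r hr
  · rintro ⟨r, hr, htend⟩
    obtain ⟨nk, hmono, h0⟩ := key_seq q hq_surj r hr
    have hcomp := htend.comp hmono.tendsto_atTop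
    have h1 : ∀ᶠ k in atTop, (1:ℝ) ≤
        sInf ((fun z : ℂ => ‖z ^ (nk k) * (z - (q (nk k) : ℂ)) ^ (nk k)‖) ''
          {z : ℂ | ‖z‖ = r}) := hcomp.eventually_ge_atTop 1
    have h2 : ∀ᶠ k in atTop,
        ‖(r : ℂ) ^ (nk k) * ((r : ℂ) - (q (nk k) : ℂ)) ^ (nk k)‖ < 1 := by
      have := h0.eventually (gt_mem_nhds (show (0:ℝ) < 1 by norm_num))
      exact this
    have h3 : ∀ k, sInf ((fun z : ℂ => ‖z ^ (nk k) * (z - (q (nk k) : ℂ)) ^ (nk k)‖) ''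
          {z : ℂ | ‖z‖ = r})
        ≤ ‖(r : ℂ) ^ (nk k) * ((r : ℂ) - (q (nk k) : ℂ)) ^ (nk k)‖ := by
      intro k
      apply csInf_le
      · refine ⟨0, ?_⟩
        rintro x ⟨z, _, rfl⟩
        exact norm_nonneg _
      · exact ⟨(r : ℂ), by simp [abs_of_pos hr], rfl⟩
    obtain ⟨k, hk1, hk2⟩ := (h1.and h2).exists
    linarith [h3 k]
end

section
/- Let U ⊂ ℂ and let n(r) be the number of points of U in the closed disk of radius r. If limsup_{r→∞} (log n(r))/(log r) > 1, then U is an E-unicity set: every entire function of exponential type vanishing on U is identically zero. -/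
open Filter Metric

private lemma factor_zeros : ∀ S : Finset ℂ, ∀ f : ℂ → ℂ, Differentiable ℂ f →
    (∀ a ∈ S, f a = 0) →
    ∃ g : ℂ → ℂ, Differentiable ℂ g ∧ ∀ z, f z = g z * ∏ a ∈ S, (z - a) := by
  intro S
  induction S using Finset.induction_on with
  | empty => exact fun f hf _ => ⟨f, hf, by simp⟩
  | @insert a s ha ih =>
    intro f hf h0
    have hfa : f a = 0 := h0 a (Finset.mem_insert_self a s)
    have hfd : Differentiable ℂ (dslope f a) := by
      rw [← differentiableOn_univ] at hf ⊢
      exact (Complex.differentiableOn_dslope univ_mem).mpr hf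
    have h0' : ∀ b ∈ s, dslope f a b = 0 := by
      intro b hb
      have hba : b ≠ a := fun e => ha (e ▸ hb)
      rw [dslope_of_ne f hba]
      simp [slope, hfa, h0 b (Finset.mem_insert_of_mem hb)]
    obtain ⟨g, hg, hfac⟩ := ih (dslope f a) hfd h0'
    refine ⟨g, hg, fun z => ?_⟩
    have h1 : (z - a) • dslope f a z = f z - f a := sub_smul_dslope f a z
    rw [smul_eq_mul, hfa, sub_zero] at h1
    rw [Finset.prod_insert ha, ← h1, hfac z]
    ring

private lemma count_bound (f : ℂ → ℂ) (hf : Differentiable ℂ f)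
    (A B : ℝ) (hA : 0 < A)
    (hbd : ∀ z : ℂ, ‖f z‖ ≤ A * Real.exp (B * ‖z‖))
    (z₁ : ℂ) (r : ℝ) (hr1 : 1 ≤ r) (hrz : ‖z₁‖ ≤ r)
    (S : Finset ℂ) (hS0 : ∀ a ∈ S, f a = 0) (hSr : ∀ a ∈ S, ‖a‖ ≤ r) :
    ‖f z₁‖ * 3 ^ S.card ≤ A * Real.exp (7 * B * r) := by
  obtain ⟨g, hg, hfac⟩ := factor_zeros S f hf hS0
  have hr0 : (0 : ℝ) < r := lt_of_lt_of_le one_pos hr1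
  set n := S.card with hn
  set C : ℝ := A * Real.exp (7 * B * r) / (6 * r) ^ n with hC
  have h6r : (0 : ℝ) < (6 * r) ^ n := by positivity
  -- bound for g on the sphere of radius 7r
  have hgC : ∀ w ∈ frontier (ball (0 : ℂ) (7 * r)), ‖g w‖ ≤ C := by
    intro w hw
    rw [frontier_ball (0 : ℂ) (by positivity : 7 * r ≠ 0)] at hw
    have hwabs : ‖w‖ = 7 * r := by
      simpa [Complex.dist_eq] using (mem_sphere_iff_norm.mp hw)
    have hprod : (6 * r) ^ n ≤ ∏ a ∈ S, ‖w - a‖ := by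
      rw [← Finset.prod_const]
      refine Finset.prod_le_prod (fun a _ => by positivity) (fun a haS => ?_)
      have h1 : ‖w‖ - ‖a‖ ≤ ‖w - a‖ := by
        simpa using norm_sub_norm_le w a
      have := hSr a haS
      linarith [hwabs ▸ h1]
    have hfw : ‖f w‖ ≤ A * Real.exp (7 * B * r) := by
      calc ‖f w‖ ≤ A * Real.exp (B * ‖w‖) := hbd w
        _ = A * Real.exp (7 * B * r) := by rw [hwabs]; ring_nf
    have hfw2 : ‖f w‖ = ‖g w‖ * ∏ a ∈ S, ‖w - a‖ := by
      rw [hfac w, norm_mul]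
      congr 1
      exact norm_prod _ _
    have h2 : ‖g w‖ * (6 * r) ^ n ≤ A * Real.exp (7 * B * r) := by
      calc ‖g w‖ * (6 * r) ^ n ≤ ‖g w‖ * ∏ a ∈ S, ‖w - a‖ := by
            exact mul_le_mul_of_nonneg_left hprod (norm_nonneg _)
        _ = ‖f w‖ := by rw [hfw2]
        _ ≤ A * Real.exp (7 * B * r) := hfw
    rw [hC]
    rw [le_div_iff₀ h6r]
    exact h2
  -- maximum modulus principle
  have hgz : ‖g z₁‖ ≤ C := by
    refine Complex.norm_le_of_forall_mem_frontier_norm_le isBounded_ball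
      hg.diffContOnCl hgC ?_
    rw [closure_ball (0 : ℂ) (by positivity : 7 * r ≠ 0), mem_closedBall,
      Complex.dist_eq, sub_zero]
    linarith
  -- product bound at z₁
  have hprod1 : ∏ a ∈ S, ‖z₁ - a‖ ≤ (2 * r) ^ n := by
    rw [← Finset.prod_const]
    refine Finset.prod_le_prod (fun a _ => norm_nonneg _) (fun a haS => ?_)
    have h1 : ‖z₁ - a‖ ≤ ‖z₁‖ + ‖a‖ := by
      exact norm_sub_le z₁ a
    have := hSr a haS
    linarith
  have hfz : ‖f z₁‖ ≤ C * (2 * r) ^ n := by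
    have hfz2 : ‖f z₁‖ = ‖g z₁‖ * ∏ a ∈ S, ‖z₁ - a‖ := by
      rw [hfac z₁, norm_mul]
      congr 1
      exact norm_prod _ _
    rw [hfz2]
    have h2r : (0 : ℝ) ≤ (2 * r) ^ n := by positivity
    have hC0 : 0 ≤ C := le_trans (norm_nonneg _) hgz
    exact mul_le_mul hgz hprod1 (Finset.prod_nonneg fun a _ => norm_nonneg _) hC0
  have key : C * (2 * r) ^ n * 3 ^ n = A * Real.exp (7 * B * r) := by
    have h36 : ((2 : ℝ) * r) ^ n * 3 ^ n = (6 * r) ^ n := by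
      rw [← mul_pow]; congr 1; ring
    calc C * (2 * r) ^ n * 3 ^ n = C * (6 * r) ^ n := by rw [mul_assoc, h36]
      _ = A * Real.exp (7 * B * r) := div_mul_cancel₀ _ (ne_of_gt h6r)
  calc ‖f z₁‖ * 3 ^ n ≤ C * (2 * r) ^ n * 3 ^ n := by
        exact mul_le_mul_of_nonneg_right hfz (by positivity)
    _ = A * Real.exp (7 * B * r) := key

/-- If `U ⊆ ℂ` and `n(r)` denotes the number of points of `U` in the closed disk of
radius `r`, and `limsup_{r→∞} log n(r) / log r > 1`, then `U` is an `E`-unicity set: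
every entire function of exponential type vanishing on `U` is identically zero. -/
theorem stmt_7 (U : Set ℂ)
    (h : 1 < Filter.limsup
      (fun r : ℝ => Real.log ((U ∩ Metric.closedBall 0 r).ncard) / Real.log r) atTop) :
    ∀ f : ℂ → ℂ, Differentiable ℂ f →
      (∃ A B : ℝ, 0 < A ∧ 0 < B ∧
        ∀ z : ℂ, ‖f z‖ ≤ A * Real.exp (B * ‖z‖)) →
      (∀ z ∈ U, f z = 0) → ∀ z : ℂ, f z = 0 := by
  set u : ℝ → ℝ :=
    fun r : ℝ => Real.log ((U ∩ Metric.closedBall 0 r).ncard) / Real.log r with hu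
  set c : ℝ := (1 + limsup u atTop) / 2 with hc
  have hc1 : 1 < c := by rw [hc]; linarith
  have hc2 : c < limsup u atTop := by rw [hc]; linarith
  -- frequently u r > c
  have freq : ∃ᶠ r in atTop, c < u r := by
    by_contra h'
    rw [not_frequently] at h'
    have hev : ∀ᶠ r in atTop, u r ≤ c := h'.mono fun r hr => not_lt.mp hr
    have cob : IsCoboundedUnder (· ≤ ·) atTop u := by
      refine isCoboundedUnder_le_of_eventually_le atTop (x := 0) ?_
      filter_upwards [eventually_ge_atTop (1 : ℝ)] with r hr
      have h1 : 0 ≤ Real.log ((U ∩ Metric.closedBall 0 r).ncard : ℕ) :=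
        Real.log_natCast_nonneg _
      have h2 : 0 ≤ Real.log r := Real.log_nonneg hr
      exact div_nonneg h1 h2
    have := limsup_le_of_le (cob) hev
    exact absurd hc2 (not_lt.mpr this)
  intro f hf ⟨A, B, hA, hB, hbd⟩ hU0 z
  by_contra hz
  have hfz0 : 0 < ‖f z‖ := by
    simpa [norm_pos_iff] using hz
  set K : ℝ := Real.log A - Real.log (‖f z‖) with hK
  have hlog3 : (0 : ℝ) < Real.log 3 := Real.log_pos (by norm_num)
  -- eventually conditions
  have hev : ∀ᶠ r in atTop, 2 ≤ r ∧ ‖z‖ ≤ r ∧ K / Real.log 3 ≤ r ∧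
      7 * B / Real.log 3 + 1 ≤ r ^ (c - 1) := by
    have h1 : ∀ᶠ r : ℝ in atTop, 2 ≤ r := eventually_ge_atTop 2
    have h2 : ∀ᶠ r : ℝ in atTop, ‖z‖ ≤ r := eventually_ge_atTop _
    have h3 : ∀ᶠ r : ℝ in atTop, K / Real.log 3 ≤ r := eventually_ge_atTop _
    have h4 : ∀ᶠ r : ℝ in atTop, 7 * B / Real.log 3 + 1 ≤ r ^ (c - 1) :=
      (tendsto_rpow_atTop (by linarith : (0:ℝ) < c - 1)).eventually_ge_atTop _
    filter_upwards [h1, h2, h3, h4] with r a b cc d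
    exact ⟨a, b, cc, d⟩
  obtain ⟨r, hur, hr2, hrz, hrK, hrE⟩ := (freq.and_eventually hev).exists
  have hr0 : (0 : ℝ) < r := by linarith
  have hr1 : (1 : ℝ) ≤ r := by linarith
  have hlogr : 0 < Real.log r := Real.log_pos (by linarith)
  -- the set of points is finite with many elements
  set V : Set ℂ := U ∩ Metric.closedBall 0 r with hV
  have hclogr : c * Real.log r < Real.log (V.ncard) := by
    simp only [hu] at hur
    rw [lt_div_iff₀ hlogr] at hur
    exact hur
  have hncard0 : V.ncard ≠ 0 := by
    intro h0
    rw [h0] at hclogr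
    simp only [Nat.cast_zero, Real.log_zero] at hclogr
    nlinarith
  have hVfin : V.Finite := Set.finite_of_ncard_ne_zero hncard0
  have hncardpos : 0 < (V.ncard : ℝ) := by
    exact_mod_cast Nat.pos_of_ne_zero hncard0
  -- r ^ c < ncard
  have hrc : r ^ c < (V.ncard : ℝ) := by
    have h1 : r ^ c = Real.exp (c * Real.log r) := by
      rw [Real.rpow_def_of_pos hr0, mul_comm]
    have h2 : (V.ncard : ℝ) = Real.exp (Real.log (V.ncard)) :=
      (Real.exp_log hncardpos).symm
    rw [h1, h2]
    exact Real.exp_lt_exp.mpr hclogr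
  -- apply the counting bound
  set S : Finset ℂ := hVfin.toFinset with hS
  have hcard : (S.card : ℝ) = (V.ncard : ℝ) := by
    rw [hS, Set.ncard_eq_toFinset_card V hVfin]
  have hmem : ∀ a ∈ S, a ∈ U ∧ ‖a‖ ≤ r := by
    intro a haS
    rw [hS, Set.Finite.mem_toFinset] at haS
    obtain ⟨h1, h2⟩ := haS
    refine ⟨h1, ?_⟩
    rw [Metric.mem_closedBall, Complex.dist_eq, sub_zero] at h2
    exact h2
  have hbound := count_bound f hf A B hA hbd z r hr1 hrz S
    (fun a ha => hU0 a (hmem a ha).1) (fun a ha => (hmem a ha).2)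
  -- take logs
  have hA' : 0 < A * Real.exp (7 * B * r) := by positivity
  have hlogbound : Real.log (‖f z‖) + S.card * Real.log 3 ≤
      Real.log A + 7 * B * r := by
    have h1 : Real.log (‖f z‖ * 3 ^ S.card) ≤
        Real.log (A * Real.exp (7 * B * r)) :=
      Real.log_le_log (by positivity) hbound
    rw [Real.log_mul (ne_of_gt hfz0) (by positivity),
      Real.log_mul (ne_of_gt hA) (by positivity),
      Real.log_pow, Real.log_exp] at h1
    exact_mod_cast h1
  -- n ≤ (K + 7Br)/log 3
  have hn_le : (S.card : ℝ) * Real.log 3 ≤ K + 7 * B * r := by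
    rw [hK]; linarith
  -- but n > r^c ≥ (K + 7Br)/log 3
  have hrc_ge : K + 7 * B * r ≤ r ^ c * Real.log 3 := by
    have hsplit : r ^ c = r ^ (c - 1) * r := by
      calc r ^ c = r ^ (c - 1 + 1) := by ring_nf
        _ = r ^ (c - 1) * r ^ (1 : ℝ) := Real.rpow_add hr0 _ _
        _ = r ^ (c - 1) * r := by rw [Real.rpow_one]
    have h1 : (7 * B / Real.log 3 + 1) * r ≤ r ^ (c - 1) * r :=
      mul_le_mul_of_nonneg_right hrE (le_of_lt hr0)
    have h2 : K / Real.log 3 + 7 * B / Real.log 3 * r ≤ r ^ (c - 1) * r := by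
      nlinarith
    rw [hsplit]
    have h3 := mul_le_mul_of_nonneg_right h2 (le_of_lt hlog3)
    calc K + 7 * B * r
        = (K / Real.log 3 + 7 * B / Real.log 3 * r) * Real.log 3 := by
          field_simp
      _ ≤ r ^ (c - 1) * r * Real.log 3 := h3
  have hfinal : (S.card : ℝ) * Real.log 3 < (S.card : ℝ) * Real.log 3 := by
    calc (S.card : ℝ) * Real.log 3 ≤ K + 7 * B * r := hn_le
      _ ≤ r ^ c * Real.log 3 := hrc_ge
      _ < (V.ncard : ℝ) * Real.log 3 := by
          exact mul_lt_mul_of_pos_right hrc hlog3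
      _ = (S.card : ℝ) * Real.log 3 := by rw [hcard]
  exact absurd hfinal (lt_irrefl _)
end

section
/- The set {√n : n ∈ ℕ} ⊂ ℝ ⊂ ℂ is an E-unicity set: every entire function of exponential type vanishing at every √n (n ∈ ℕ) is identically zero. -/
open Filter

private lemma dslope_entire {f : ℂ → ℂ} (hf : Differentiable ℂ f) (a : ℂ) :
    Differentiable ℂ (dslope f a) := by
  intro z
  rcases eq_or_ne z a with rfl | hz
  · rcases hf.analyticAt z with ⟨p, hp⟩
    exact hp.has_fpower_series_dslope_fslope.differentiableAt
  · exact (differentiableAt_dslope_of_ne hz).2 (hf z)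

private lemma eq_sub_mul_dslope {f : ℂ → ℂ} {a : ℂ} (ha : f a = 0) (z : ℂ) :
    f z = (z - a) * dslope f a z := by
  have h := sub_smul_dslope f a z
  rw [ha, sub_zero] at h
  rw [← h, smul_eq_mul]

noncomputable def Gseq (g : ℂ → ℂ) : ℕ → ℂ → ℂ
  | 0 => g
  | (k + 1) =>
      dslope (dslope (Gseq g k) ((Real.sqrt (k + 1) : ℝ) : ℂ))
        (-((Real.sqrt (k + 1) : ℝ) : ℂ))

private lemma Gseq_spec {g : ℂ → ℂ} (hg : Differentiable ℂ g)
    (hz : ∀ n : ℕ, g (((Real.sqrt n : ℝ) : ℂ)) = 0 ∧ g (-((Real.sqrt n : ℝ) : ℂ)) = 0) :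
    ∀ k : ℕ, Differentiable ℂ (Gseq g k) ∧
      ∀ w : ℂ, g w = (∏ n ∈ Finset.range k, (w ^ 2 - ((n : ℂ) + 1))) * Gseq g k w := by
  intro k
  induction k with
  | zero => exact ⟨hg, fun w => by simp [Gseq]⟩
  | succ k ih =>
    obtain ⟨hdiff, hrep⟩ := ih
    set a : ℂ := ((Real.sqrt ((k : ℝ) + 1) : ℝ) : ℂ) with ha_def
    have hk1 : ((k : ℝ) + 1) = ((k + 1 : ℕ) : ℝ) := by push_cast; ring
    have ha2 : a ^ 2 = (k : ℂ) + 1 := by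
      have h1 : (Real.sqrt ((k : ℝ) + 1)) ^ 2 = (k : ℝ) + 1 :=
        Real.sq_sqrt (by positivity)
      rw [ha_def]
      rw [show (((Real.sqrt ((k : ℝ) + 1) : ℝ) : ℂ)) ^ 2
        = (((Real.sqrt ((k : ℝ) + 1)) ^ 2 : ℝ) : ℂ) by push_cast; ring, h1]
      push_cast; ring
    have ha0 : a ≠ 0 := by
      rw [ha_def]
      simp only [ne_eq, Complex.ofReal_eq_zero]
      have : 0 < Real.sqrt ((k : ℝ) + 1) := Real.sqrt_pos.mpr (by positivity)
      linarith
    -- the product over range k is nonzero at points whose square is k+1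
    have hPne : ∀ w : ℂ, w ^ 2 = (k : ℂ) + 1 →
        (∏ n ∈ Finset.range k, (w ^ 2 - ((n : ℂ) + 1))) ≠ 0 := by
      intro w hw
      rw [Finset.prod_ne_zero_iff]
      intro n hn
      rw [hw]
      have : (n : ℂ) ≠ (k : ℂ) := by
        exact_mod_cast Nat.ne_of_lt (Finset.mem_range.mp hn)
      intro hcon
      apply this
      have : (k : ℂ) = (n : ℂ) := by linear_combination hcon
      exact this.symm
    have hga : g a = 0 := by
      have := (hz (k + 1)).1
      rwa [ha_def, hk1]
    have hgna : g (-a) = 0 := by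
      have := (hz (k + 1)).2
      rwa [ha_def, hk1]
    have hGa : Gseq g k a = 0 := by
      have := hrep a
      rw [hga] at this
      rcases mul_eq_zero.mp this.symm with h | h
      · exact absurd h (hPne a ha2)
      · exact h
    have hGna : Gseq g k (-a) = 0 := by
      have := hrep (-a)
      rw [hgna] at this
      rcases mul_eq_zero.mp this.symm with h | h
      · exact absurd h (hPne (-a) (by rw [neg_pow]; simpa using ha2))
      · exact h
    set h1 : ℂ → ℂ := dslope (Gseq g k) a with h1_def
    have hh1diff : Differentiable ℂ h1 := dslope_entire hdiff a
    have hh1 : ∀ w : ℂ, Gseq g k w = (w - a) * h1 w := fun w => eq_sub_mul_dslope hGa w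
    have hh1na : h1 (-a) = 0 := by
      have := hh1 (-a)
      rw [hGna] at this
      rcases mul_eq_zero.mp this.symm with h | h
      · exfalso
        apply ha0
        have : (-a - a) = 0 := h
        have h2 : (2 : ℂ) * a = 0 := by linear_combination -this
        simpa using h2
      · exact h
    have hG1 : Gseq g (k + 1) = dslope h1 (-a) := by
      rw [Gseq, h1_def, ha_def]
    have hh2 : ∀ w : ℂ, h1 w = (w - (-a)) * Gseq g (k + 1) w := by
      intro w
      rw [hG1]
      exact eq_sub_mul_dslope hh1na w
    constructor
    · rw [hG1]; exact dslope_entire hh1diff (-a)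
    · intro w
      rw [Finset.prod_range_succ]
      have : g w = (∏ n ∈ Finset.range k, (w ^ 2 - ((n : ℂ) + 1))) *
          ((w - a) * ((w - (-a)) * Gseq g (k + 1) w)) := by
        rw [← hh2 w, ← hh1 w]; exact hrep w
      rw [this]
      have hfac : (w - a) * (w - (-a)) = w ^ 2 - ((k : ℂ) + 1) := by
        have : (w - a) * (w - (-a)) = w ^ 2 - a ^ 2 := by ring
        rw [this, ha2]
      push_cast
      linear_combination ((∏ n ∈ Finset.range k, (w ^ 2 - ((n : ℂ) + 1)))
        * Gseq g (k + 1) w) * hfac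

/-- The set `{√n : n ∈ ℕ}` is an `E`-unicity set: every entire function of exponential
type vanishing at every `√n` is identically zero. -/
theorem stmt_8 :
    ∀ f : ℂ → ℂ, Differentiable ℂ f →
      (∃ A B : ℝ, 0 < A ∧ 0 < B ∧
        ∀ z : ℂ, ‖f z‖ ≤ A * Real.exp (B * ‖z‖)) →
      (∀ n : ℕ, f ((Real.sqrt n : ℝ) : ℂ) = 0) → ∀ z : ℂ, f z = 0 := by
  intro f hf hexp hvan z
  obtain ⟨A, B, hA, hB, hbound⟩ := hexp
  -- the even auxiliary function
  set g : ℂ → ℂ := fun w => f w * f (-w) with hg_def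
  have hg : Differentiable ℂ g := hf.mul (hf.comp differentiable_id.neg)
  have hgz : ∀ n : ℕ, g (((Real.sqrt n : ℝ) : ℂ)) = 0 ∧ g (-((Real.sqrt n : ℝ) : ℂ)) = 0 := by
    intro n
    constructor
    · simp [hg_def, hvan n]
    · simp only [hg_def, neg_neg]
      rw [hvan n, mul_zero]
  have hgb : ∀ w : ℂ, ‖g w‖ ≤ A * A * Real.exp (2 * B * ‖w‖) := by
    intro w
    have h1 : ‖f w‖ ≤ A * Real.exp (B * ‖w‖) := hbound w
    have h2 : ‖f (-w)‖ ≤ A * Real.exp (B * ‖w‖) := by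
      simpa using hbound (-w)
    calc ‖g w‖ = ‖f w‖ * ‖f (-w)‖ := by
          simp [hg_def]
      _ ≤ (A * Real.exp (B * ‖w‖)) * (A * Real.exp (B * ‖w‖)) := by
          apply mul_le_mul h1 h2 (norm_nonneg _) (by positivity)
      _ = A * A * Real.exp (2 * B * ‖w‖) := by
          rw [show 2 * B * ‖w‖ = B * ‖w‖ + B * ‖w‖ by ring,
            Real.exp_add]; ring
  -- key: g vanishes everywhere
  have hg0 : ∀ w : ℂ, g w = 0 := by
    intro w
    have hGdiff := fun k => (Gseq_spec hg hgz k).1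
    have hGrep := fun k => (Gseq_spec hg hgz k).2
    set M : ℝ := ‖w‖ ^ 2 with hM_def
    have hM0 : 0 ≤ M := by positivity
    set C : ℝ := A * A * Real.exp (64 * B ^ 2) with hC_def
    set r : ℝ := Real.exp (1 / 16) * (2 / 3) with hr_def
    have hr0 : 0 ≤ r := by positivity
    have hr1 : r < 1 := by
      have h16 : Real.exp (1 / 16) < 3 / 2 := by
        have hpow : Real.exp (1 / 16) ^ (16 : ℕ) = Real.exp 1 := by
          rw [← Real.exp_nat_mul]; norm_num
        have h1 : Real.exp 1 < (3 / 2 : ℝ) ^ (16 : ℕ) := by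
          have := Real.exp_one_lt_d9
          nlinarith [this]
        have := hpow ▸ h1
        by_contra hcon
        push_neg at hcon
        have : (3 / 2 : ℝ) ^ (16 : ℕ) ≤ Real.exp (1 / 16) ^ (16 : ℕ) :=
          pow_le_pow_left₀ (by norm_num) hcon 16
        linarith
      calc r = Real.exp (1 / 16) * (2 / 3) := hr_def
        _ < (3 / 2) * (2 / 3) := by
            apply mul_lt_mul_of_pos_right h16 (by norm_num)
        _ = 1 := by norm_num
    -- the geometric bound for large N
    have key : ∀ N : ℕ, 1 ≤ N → M ≤ N → ‖g w‖ ≤ C * r ^ N := by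
      intro N hN1 hMN
      set R : ℝ := 2 * Real.sqrt N with hR_def
      have hsqrtN : 0 < Real.sqrt N := Real.sqrt_pos.mpr (by exact_mod_cast hN1)
      have hR0 : 0 < R := by positivity
      have hsq : Real.sqrt N ^ 2 = (N : ℝ) := Real.sq_sqrt (by positivity)
      -- product lower bound on the circle of radius R
      set P : ℝ := ∏ n ∈ Finset.range N, (4 * (N : ℝ) - ((n : ℝ) + 1)) with hP_def
      have hfacpos : ∀ n ∈ Finset.range N, (0 : ℝ) < 4 * (N : ℝ) - ((n : ℝ) + 1) := by
        intro n hn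
        have h1 : (n : ℝ) + 1 ≤ (N : ℝ) := by
          have := Finset.mem_range.mp hn
          exact_mod_cast Nat.succ_le_of_lt this
        have hN : (1 : ℝ) ≤ (N : ℝ) := by exact_mod_cast hN1
        linarith
      have hP0 : 0 < P := Finset.prod_pos hfacpos
      -- bound for Gseq g N on the sphere of radius R
      have hfront : ∀ x ∈ frontier (Metric.ball (0 : ℂ) R),
          ‖Gseq g N x‖ ≤ A * A * Real.exp (2 * B * R) / P := by
        intro x hx
        rw [frontier_ball (0 : ℂ) (ne_of_gt hR0)] at hx
        have hxR : ‖x‖ = R := by simpa using hx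
        have hx2 : ‖x ^ 2‖ = 4 * (N : ℝ) := by
          rw [norm_pow, hxR, hR_def]
          nlinarith [hsq]
        have hprodle : P ≤ ∏ n ∈ Finset.range N, ‖x ^ 2 - ((n : ℂ) + 1)‖ := by
          apply Finset.prod_le_prod
          · intro n hn; exact le_of_lt (hfacpos n hn)
          · intro n hn
            have habs : ‖(n : ℂ) + 1‖ = (n : ℝ) + 1 := by
              rw [show ((n : ℂ) + 1) = (((n : ℝ) + 1 : ℝ) : ℂ) by push_cast; ring]
              rw [Complex.norm_real, Real.norm_eq_abs]
              rw [abs_of_nonneg (by positivity)]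
            calc 4 * (N : ℝ) - ((n : ℝ) + 1)
                = ‖x ^ 2‖ - ‖(n : ℂ) + 1‖ := by rw [hx2, habs]
              _ ≤ ‖x ^ 2 - ((n : ℂ) + 1)‖ := by
                  have := norm_sub_norm_le (x ^ 2) ((n : ℂ) + 1)
                  simpa using this
        have hgx : ‖g x‖ = (∏ n ∈ Finset.range N, ‖x ^ 2 - ((n : ℂ) + 1)‖)
            * ‖Gseq g N x‖ := by
          rw [hGrep N x]
          rw [norm_mul, norm_prod]
        have hchain : P * ‖Gseq g N x‖ ≤ A * A * Real.exp (2 * B * R) := by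
          calc P * ‖Gseq g N x‖
              ≤ (∏ n ∈ Finset.range N, ‖x ^ 2 - ((n : ℂ) + 1)‖)
                * ‖Gseq g N x‖ := by
                apply mul_le_mul_of_nonneg_right hprodle (norm_nonneg _)
            _ = ‖g x‖ := hgx.symm
            _ ≤ A * A * Real.exp (2 * B * ‖x‖) := hgb x
            _ = A * A * Real.exp (2 * B * R) := by rw [hxR]
        rw [le_div_iff₀ hP0]
        linarith [hchain]
      -- maximum modulus
      have hmax : ‖Gseq g N w‖ ≤ A * A * Real.exp (2 * B * R) / P := by
        apply Complex.norm_le_of_forall_mem_frontier_norm_le Metric.isBounded_ball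
          (hGdiff N).diffContOnCl hfront
        rw [closure_ball (0 : ℂ) (ne_of_gt hR0)]
        rw [Metric.mem_closedBall, dist_zero_right]
        have hwle : ‖w‖ ≤ Real.sqrt N := by
          rw [show ‖w‖ = Real.sqrt M by rw [hM_def, Real.sqrt_sq (norm_nonneg w)]]
          exact Real.sqrt_le_sqrt hMN
        linarith [hsqrtN]
      -- upper bound for the product at w
      have hprodup : (∏ n ∈ Finset.range N, ‖w ^ 2 - ((n : ℂ) + 1)‖)
          ≤ (2 / 3) ^ N * P := by
        have : (2 / 3 : ℝ) ^ N * P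
            = ∏ n ∈ Finset.range N, ((2 / 3) * (4 * (N : ℝ) - ((n : ℝ) + 1))) := by
          rw [Finset.prod_mul_distrib, Finset.prod_const, Finset.card_range]
        rw [this]
        apply Finset.prod_le_prod
        · intro n hn; exact norm_nonneg _
        · intro n hn
          have hn' : (n : ℝ) + 1 ≤ (N : ℝ) := by
            have := Finset.mem_range.mp hn
            exact_mod_cast Nat.succ_le_of_lt this
          have habs : ‖(n : ℂ) + 1‖ = (n : ℝ) + 1 := by
            rw [show ((n : ℂ) + 1) = (((n : ℝ) + 1 : ℝ) : ℂ) by push_cast; ring]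
            rw [Complex.norm_real, Real.norm_eq_abs, abs_of_nonneg (by positivity)]
          have hw2 : ‖w ^ 2‖ = M := by
            rw [norm_pow, hM_def]
          calc ‖w ^ 2 - ((n : ℂ) + 1)‖
              ≤ ‖w ^ 2‖ + ‖(n : ℂ) + 1‖ := by
                have := norm_sub_le (w ^ 2) ((n : ℂ) + 1)
                simpa using this
            _ = M + ((n : ℝ) + 1) := by rw [hw2, habs]
            _ ≤ (2 / 3) * (4 * (N : ℝ) - ((n : ℝ) + 1)) := by linarith [hMN, hn']
      -- combine
      have hgw : ‖g w‖ = (∏ n ∈ Finset.range N, ‖w ^ 2 - ((n : ℂ) + 1)‖)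
          * ‖Gseq g N w‖ := by
        rw [hGrep N w, norm_mul, norm_prod]
      have hEpos : (0 : ℝ) < A * A * Real.exp (2 * B * R) := by positivity
      have step1 : ‖g w‖ ≤ (2 / 3) ^ N * (A * A * Real.exp (2 * B * R)) := by
        rw [hgw]
        calc (∏ n ∈ Finset.range N, ‖w ^ 2 - ((n : ℂ) + 1)‖) * ‖Gseq g N w‖
            ≤ ((2 / 3) ^ N * P) * (A * A * Real.exp (2 * B * R) / P) := by
              apply mul_le_mul hprodup hmax (norm_nonneg _)
              positivity
          _ = (2 / 3) ^ N * (A * A * Real.exp (2 * B * R)) := by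
              field_simp
      -- bound the exponential: 2B·R = 4B√N ≤ 64B² + N/16
      have hexpbd : Real.exp (2 * B * R) ≤ Real.exp (64 * B ^ 2) * Real.exp (1 / 16) ^ N := by
        have h1 : 2 * B * R ≤ 64 * B ^ 2 + (N : ℝ) * (1 / 16) := by
          rw [hR_def]
          nlinarith [sq_nonneg (8 * B - Real.sqrt N / 4), hsq, Real.sqrt_nonneg (N : ℝ)]
        calc Real.exp (2 * B * R) ≤ Real.exp (64 * B ^ 2 + (N : ℝ) * (1 / 16)) :=
              Real.exp_le_exp.mpr h1
          _ = Real.exp (64 * B ^ 2) * Real.exp (1 / 16) ^ N := by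
              rw [Real.exp_add, Real.exp_nat_mul]
      calc ‖g w‖ ≤ (2 / 3) ^ N * (A * A * Real.exp (2 * B * R)) := step1
        _ ≤ (2 / 3) ^ N * (A * A * (Real.exp (64 * B ^ 2) * Real.exp (1 / 16) ^ N)) := by
            apply mul_le_mul_of_nonneg_left _ (by positivity)
            apply mul_le_mul_of_nonneg_left hexpbd (by positivity)
        _ = C * r ^ N := by
            rw [hC_def, hr_def, mul_pow]; ring
    -- take the limit
    have htend : Tendsto (fun N : ℕ => C * r ^ N) atTop (nhds 0) := by
      have := (tendsto_pow_atTop_nhds_zero_of_lt_one hr0 hr1).const_mul C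
      simpa using this
    have hle : ‖g w‖ ≤ 0 := by
      apply ge_of_tendsto htend
      filter_upwards [eventually_ge_atTop (max 1 ⌈M⌉₊)] with N hN
      apply key N (le_trans (le_max_left _ _) hN)
      calc M ≤ (⌈M⌉₊ : ℝ) := Nat.le_ceil M
        _ ≤ (N : ℝ) := by exact_mod_cast le_trans (le_max_right _ _) hN
    exact norm_le_zero_iff.mp hle
  -- from f(z)·f(−z) ≡ 0 conclude f ≡ 0
  by_contra hne
  have hev : ∀ᶠ x in nhds z, f x ≠ 0 := hf.continuous.continuousAt.eventually_ne hne
  have hev2 : (fun x => f (-x)) =ᶠ[nhds z] 0 := by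
    filter_upwards [hev] with x hx
    have := hg0 x
    simp only [hg_def] at this
    rcases mul_eq_zero.mp this with h | h
    · exact absurd h hx
    · exact h
  have hana : AnalyticOnNhd ℂ (fun x => f (-x)) Set.univ := by
    intro x _
    exact ((hf.comp differentiable_id.neg).analyticAt x)
  have := hana.eqOn_zero_of_preconnected_of_eventuallyEq_zero isPreconnected_univ
    (Set.mem_univ z) hev2 (Set.mem_univ (-z))
  simp only [neg_neg, Pi.zero_apply] at this
  exact hne this
end

section
/- If U ⊂ ℂ is an E-unicity set, then the linear span of the exponential functions e_w(z) = e^{wz}, w ∈ U, is dense in the space H(ℂ) of entire functions with the topology of uniform convergence on compact sets. -/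
open Filter Topology Complex

/-! Auxiliary definitions and lemmas -/

noncomputable def emf (n : ℕ) (w : ℂ) : C(ℂ, ℂ) :=
  ⟨fun z => z ^ n * Complex.exp (w * z), by fun_prop⟩

lemma emf_apply (n : ℕ) (w z : ℂ) : emf n w z = z ^ n * Complex.exp (w * z) := rfl

/-- Basis of neighborhoods of `0` in `C(ℂ, ℂ)` with compact-open topology. -/
lemma cm_nhds_zero_basis : (𝓝 (0 : C(ℂ, ℂ))).HasBasis
    (fun Kε : Set ℂ × ℝ => IsCompact Kε.1 ∧ 0 < Kε.2)
    (fun Kε => {g : C(ℂ, ℂ) | ∀ z ∈ Kε.1, ‖g z‖ ≤ Kε.2}) := by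
  have B := (Metric.uniformity_basis_dist_le (α := ℂ)).compactConvergenceUniformity (α := ℂ)
  refine (nhds_basis_uniformity' B).congr (fun i => Iff.rfl) (fun i hi => ?_)
  ext g
  simp [UniformSpace.ball, dist_zero_left]

instance : LocallyConvexSpace ℝ C(ℂ, ℂ) := by
  refine LocallyConvexSpace.ofBasisZero ℝ _ _ _ cm_nhds_zero_basis ?_
  rintro ⟨K, ε⟩ ⟨hK, hε⟩
  intro g hg h hh a b ha hb hab
  intro z hz
  have h1 : ((a • g + b • h) : C(ℂ, ℂ)) z = a • g z + b • h z := rfl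
  rw [Set.mem_setOf_eq] at *
  calc ‖((a • g + b • h) : C(ℂ, ℂ)) z‖ = ‖a • g z + b • h z‖ := by rw [h1]
    _ ≤ ‖a • g z‖ + ‖b • h z‖ := norm_add_le _ _
    _ = a * ‖g z‖ + b * ‖h z‖ := by
        rw [norm_smul, norm_smul, Real.norm_of_nonneg ha, Real.norm_of_nonneg hb]
    _ ≤ a * ε + b * ε := by
        gcongr
        · exact hg z hz
        · exact hh z hz
    _ = ε := by rw [← add_mul, hab, one_mul]

/-- Quantitative continuity of a continuous linear functional on `C(ℂ, ℂ)`. -/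
lemma cm_bound (L : C(ℂ, ℂ) →L[ℂ] ℂ) :
    ∃ (K : Set ℂ) (ε : ℝ), IsCompact K ∧ 0 < ε ∧
      ∀ (g : C(ℂ, ℂ)) (m : ℝ), 0 < m → (∀ z ∈ K, ‖g z‖ ≤ m) → ‖L g‖ ≤ m / ε := by
  have h0 : L 0 = 0 := map_zero L
  have h1 : {g : C(ℂ, ℂ) | ‖L g‖ ≤ 1} ∈ 𝓝 (0 : C(ℂ, ℂ)) := by
    have := L.continuous.tendsto (0 : C(ℂ, ℂ))
    rw [h0] at this
    have hb : Metric.closedBall (0 : ℂ) 1 ∈ 𝓝 (0 : ℂ) := Metric.closedBall_mem_nhds _ one_pos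
    filter_upwards [this hb] with g hg
    simpa [dist_zero_right] using hg
  obtain ⟨⟨K, ε⟩, ⟨hK, hε⟩, hsub⟩ := cm_nhds_zero_basis.mem_iff.1 h1
  refine ⟨K, ε, hK, hε, fun g m hm hg => ?_⟩
  have key : ‖L (((ε / m : ℝ) : ℂ) • g)‖ ≤ 1 := by
    apply hsub
    intro z hz
    have : ‖(((ε / m : ℝ) : ℂ) • g) z‖ = (ε / m) * ‖g z‖ := by
      rw [ContinuousMap.smul_apply, norm_smul, Complex.norm_real,
        Real.norm_of_nonneg (div_pos hε hm).le]
    rw [this]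
    calc (ε / m) * ‖g z‖ ≤ (ε / m) * m := by
          gcongr; exact hg z hz
      _ = ε := by field_simp
  rw [map_smul, norm_smul] at key
  have hnorm : ‖(((ε / m : ℝ)) : ℂ)‖ = ε / m := by
    rw [Complex.norm_real, Real.norm_of_nonneg (div_pos hε hm).le]
  rw [hnorm] at key
  rw [div_mul_eq_mul_div, div_le_one hm] at key
  rw [le_div_iff₀ hε]
  linarith

/-- The difference quotients of `w ↦ emf n w` converge in `C(ℂ, ℂ)`. -/
lemma emf_tendsto (n : ℕ) (w : ℂ) :
    Tendsto (fun v => (v - w)⁻¹ • (emf n v - emf n w)) (𝓝[≠] w) (𝓝 (emf (n + 1) w)) := by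
  rw [ContinuousMap.tendsto_iff_forall_isCompact_tendstoUniformlyOn]
  intro K hK
  obtain ⟨R₀, hR₀⟩ := hK.isBounded.subset_closedBall 0
  set R : ℝ := max R₀ 0 + 1 with hRdef
  have hR1 : 1 ≤ R := by simp [hRdef]
  have hR0 : 0 < R := lt_of_lt_of_le one_pos hR1
  have hzR : ∀ z ∈ K, ‖z‖ ≤ R := by
    intro z hz
    have := hR₀ hz
    rw [Metric.mem_closedBall, dist_zero_right] at this
    calc ‖z‖ ≤ R₀ := this
      _ ≤ R := by simp [hRdef]; linarith [le_max_left R₀ 0]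
  set C : ℝ := R ^ (n + 2) * Real.exp (‖w‖ * R) + 1 with hCdef
  have hC : 0 < C := by positivity
  rw [Metric.tendstoUniformlyOn_iff]
  intro ε hε
  set δ : ℝ := min (1 / R) (ε / C) with hδdef
  have hδ : 0 < δ := lt_min (by positivity) (by positivity)
  filter_upwards [nhdsWithin_le_nhds (Metric.ball_mem_nhds w hδ), self_mem_nhdsWithin]
    with v hv hne z hz
  have hvw : v - w ≠ 0 := sub_ne_zero.2 hne
  have hvwδ : ‖v - w‖ < δ := by rwa [Metric.mem_ball, dist_eq_norm] at hv
  set h : ℂ := v - w with hhdef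
  have hkey : emf (n + 1) w z - (h⁻¹ • (emf n v - emf n w)) z
      = -(z ^ n * Complex.exp (w * z) * h⁻¹ * (Complex.exp (h * z) - 1 - h * z)) := by
    have hexp : Complex.exp (v * z) = Complex.exp (w * z) * Complex.exp (h * z) := by
      rw [← Complex.exp_add, hhdef]; ring_nf
    have happ : (h⁻¹ • (emf n v - emf n w)) z = h⁻¹ * (emf n v z - emf n w z) := rfl
    rw [happ, emf_apply, emf_apply, emf_apply, hexp]
    field_simp
    ring
  rw [dist_eq_norm, hkey, norm_neg]
  have hz1 : ‖z‖ ≤ R := hzR z hz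
  have hhz : ‖h * z‖ ≤ 1 := by
    rw [norm_mul]
    calc ‖h‖ * ‖z‖ ≤ δ * R := by
          apply mul_le_mul hvwδ.le hz1 (norm_nonneg _) hδ.le
      _ ≤ (1 / R) * R := by gcongr; exact min_le_left _ _
      _ = 1 := by field_simp
  have hest : ‖Complex.exp (h * z) - 1 - h * z‖ ≤ ‖h * z‖ ^ 2 :=
    Complex.norm_exp_sub_one_sub_id_le hhz
  have hnorm : ‖z ^ n * Complex.exp (w * z) * h⁻¹ * (Complex.exp (h * z) - 1 - h * z)‖
      ≤ R ^ n * Real.exp (‖w‖ * R) * ‖h‖ * R ^ 2 := by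
    rw [norm_mul, norm_mul, norm_mul, norm_pow, norm_inv]
    have hexpb : ‖Complex.exp (w * z)‖ ≤ Real.exp (‖w‖ * R) := by
      rw [Complex.norm_exp]
      apply Real.exp_le_exp.2
      calc (w * z).re ≤ ‖w * z‖ := Complex.re_le_norm _
        _ = ‖w‖ * ‖z‖ := by rw [norm_mul]
        _ ≤ ‖w‖ * R := by gcongr
    have hlast : ‖Complex.exp (h * z) - 1 - h * z‖ ≤ (‖h‖ * R) ^ 2 := by
      calc ‖Complex.exp (h * z) - 1 - h * z‖ ≤ ‖h * z‖ ^ 2 := hest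
        _ ≤ (‖h‖ * R) ^ 2 := by
            rw [norm_mul]
            gcongr
    calc ‖z‖ ^ n * ‖Complex.exp (w * z)‖ * ‖h‖⁻¹ * ‖Complex.exp (h * z) - 1 - h * z‖
        ≤ R ^ n * Real.exp (‖w‖ * R) * ‖h‖⁻¹ * (‖h‖ * R) ^ 2 := by
          gcongr
      _ = R ^ n * Real.exp (‖w‖ * R) * (‖h‖⁻¹ * ‖h‖) * ‖h‖ * R ^ 2 := by ring
      _ = R ^ n * Real.exp (‖w‖ * R) * ‖h‖ * R ^ 2 := by
          rw [inv_mul_cancel₀ (norm_ne_zero_iff.2 hvw)]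
          ring
  calc ‖z ^ n * Complex.exp (w * z) * h⁻¹ * (Complex.exp (h * z) - 1 - h * z)‖
      ≤ R ^ n * Real.exp (‖w‖ * R) * ‖h‖ * R ^ 2 := hnorm
    _ = R ^ (n + 2) * Real.exp (‖w‖ * R) * ‖h‖ := by ring
    _ < C * δ := by
        have hbd : R ^ (n + 2) * Real.exp (‖w‖ * R) ≤ C := by
          simp only [hCdef]; linarith
        calc R ^ (n + 2) * Real.exp (‖w‖ * R) * ‖h‖ ≤ C * ‖h‖ := by gcongr
          _ < C * δ := by apply mul_lt_mul_of_pos_left hvwδ hC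
    _ ≤ C * (ε / C) := by gcongr; exact min_le_right _ _
    _ = ε := by field_simp

/-- Differentiating under a continuous linear functional. -/
lemma hasDerivAt_L_emf (L : C(ℂ, ℂ) →L[ℂ] ℂ) (n : ℕ) (w : ℂ) :
    HasDerivAt (fun v => L (emf n v)) (L (emf (n + 1) w)) w := by
  rw [hasDerivAt_iff_tendsto_slope]
  refine Tendsto.congr' ?_ ((L.continuous.tendsto _).comp (emf_tendsto n w))
  filter_upwards [self_mem_nhdsWithin] with v hv
  have hv' : v - w ≠ 0 := sub_ne_zero.2 hv
  show L ((v - w)⁻¹ • (emf n v - emf n w)) = slope (fun v => L (emf n v)) w v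
  rw [slope_def_field, map_smul, map_sub, smul_eq_mul, div_eq_inv_mul]

set_option maxHeartbeats 2000000 in
/-- If `U ⊆ ℂ` is an `E`-unicity set, then the linear span of the exponentials
`e_w(z) = exp (w z)`, `w ∈ U`, is dense in the space of entire functions with the
topology of uniform convergence on compact sets (realized inside `C(ℂ, ℂ)` with the
compact-open topology). -/
theorem stmt_9 (U : Set ℂ)
    (hU : ∀ f : ℂ → ℂ, Differentiable ℂ f →
      (∃ A B : ℝ, 0 < A ∧ 0 < B ∧
        ∀ z : ℂ, ‖f z‖ ≤ A * Real.exp (B * ‖z‖)) →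
      (∀ z ∈ U, f z = 0) → ∀ z : ℂ, f z = 0) :
    ∀ f : ℂ → ℂ, (hf : Differentiable ℂ f) →
      (⟨f, hf.continuous⟩ : C(ℂ, ℂ)) ∈
        closure (Submodule.span ℂ
          {g : C(ℂ, ℂ) | ∃ w ∈ U, g = ⟨fun z => Complex.exp (w * z),
            (Complex.continuous_exp.comp (continuous_const.mul continuous_id))⟩} :
          Set C(ℂ, ℂ)) := by
  intro f hf
  by_contra hmem
  set fC : C(ℂ, ℂ) := ⟨f, hf.continuous⟩ with hfC
  set S : Set C(ℂ, ℂ) := {g : C(ℂ, ℂ) | ∃ w ∈ U, g = ⟨fun z => Complex.exp (w * z),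
    (Complex.continuous_exp.comp (continuous_const.mul continuous_id))⟩} with hS
  set M : Submodule ℂ C(ℂ, ℂ) := Submodule.span ℂ S with hM
  -- separation
  have hconv : Convex ℝ (closure (M : Set C(ℂ, ℂ))) := (M.restrictScalars ℝ).convex.closure
  obtain ⟨L, c, hLlt, hcr⟩ := RCLike.geometric_hahn_banach_closed_point (𝕜 := ℂ)
    hconv isClosed_closure hmem
  simp only [RCLike.re_to_complex] at hLlt hcr
  have hc0 : 0 < c := by
    have := hLlt 0 (subset_closure M.zero_mem)
    simpa using this
  -- L vanishes on M
  have hL0 : ∀ a ∈ M, L a = 0 := by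
    intro a ha
    by_contra hne
    have hmemM : (((c : ℂ) + 1) / L a) • a ∈ M := M.smul_mem _ ha
    have h2 := hLlt _ (subset_closure hmemM)
    rw [map_smul, smul_eq_mul, div_mul_cancel₀ _ hne] at h2
    simp at h2
    linarith
  have hLf : L fC ≠ 0 := by
    intro h
    rw [h] at hcr
    simp at hcr
    linarith
  -- quantitative continuity
  obtain ⟨K, ε, hK, hε, hbound⟩ := cm_bound L
  obtain ⟨R₀, hR₀⟩ := hK.isBounded.subset_closedBall 0
  set R : ℝ := max R₀ 0 + 1 with hRdef
  have hR0 : 0 < R := by positivity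
  have hzR : ∀ z ∈ K, ‖z‖ ≤ R := by
    intro z hz
    have := hR₀ hz
    rw [Metric.mem_closedBall, dist_zero_right] at this
    calc ‖z‖ ≤ R₀ := this
      _ ≤ R := by simp [hRdef]; linarith [le_max_left R₀ 0]
  -- the functional transform F
  set F : ℂ → ℂ := fun w => L (emf 0 w) with hF
  have hFdiff : Differentiable ℂ F := fun w => (hasDerivAt_L_emf L 0 w).differentiableAt
  have hFbound : ∀ w : ℂ, ‖F w‖ ≤ (1 / ε) * Real.exp (R * ‖w‖) := by
    intro w
    have hm : (0 : ℝ) < Real.exp (‖w‖ * R) := Real.exp_pos _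
    have hb : ∀ z ∈ K, ‖(emf 0 w) z‖ ≤ Real.exp (‖w‖ * R) := by
      intro z hz
      rw [emf_apply, pow_zero, one_mul, Complex.norm_exp]
      apply Real.exp_le_exp.2
      calc (w * z).re ≤ ‖w * z‖ := Complex.re_le_norm _
        _ = ‖w‖ * ‖z‖ := by rw [norm_mul]
        _ ≤ ‖w‖ * R := by gcongr; exact hzR z hz
    have := hbound (emf 0 w) _ hm hb
    calc ‖L (emf 0 w)‖ ≤ Real.exp (‖w‖ * R) / ε := this
      _ = (1 / ε) * Real.exp (R * ‖w‖) := by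
          rw [mul_comm ‖w‖ R]
          ring
  -- F vanishes on U
  have hFvanish : ∀ w ∈ U, F w = 0 := by
    intro w hw
    have hgS : emf 0 w ∈ S := by
      refine ⟨w, hw, ?_⟩
      ext z
      simp [emf_apply]
    exact hL0 _ (Submodule.subset_span hgS)
  -- apply the unicity hypothesis
  have hF0 : ∀ w : ℂ, F w = 0 :=
    hU F hFdiff ⟨1 / ε, R, by positivity, hR0, hFbound⟩ hFvanish
  -- all higher transforms vanish
  have hGn : ∀ n : ℕ, ∀ w : ℂ, L (emf n w) = 0 := by
    intro n
    induction n with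
    | zero => exact hF0
    | succ n ih =>
      intro w
      have h1 : HasDerivAt (fun v => L (emf n v)) (L (emf (n + 1) w)) w :=
        hasDerivAt_L_emf L n w
      have h2 : (fun v => L (emf n v)) = fun _ => (0 : ℂ) := funext ih
      rw [h2] at h1
      exact h1.unique (hasDerivAt_const w (0 : ℂ))
  -- L vanishes on monomials
  have hmono : ∀ n : ℕ, L ⟨fun z => z ^ n, continuous_pow n⟩ = 0 := by
    intro n
    have : (⟨fun z => z ^ n, continuous_pow n⟩ : C(ℂ, ℂ)) = emf n 0 := by
      ext z
      simp [emf_apply]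
    rw [this]
    exact hGn n 0
  -- power series of f
  obtain ⟨p, hps⟩ : ∃ p : FormalMultilinearSeries ℂ ℂ ℂ, HasFPowerSeriesOnBall f p 0 ⊤ :=
    ⟨_, hf.hasFPowerSeriesOnBall 0 one_pos⟩
  set P : ℕ → C(ℂ, ℂ) := fun N => ⟨fun z => p.partialSum N z, p.partialSum_continuous N⟩
    with hP
  -- L vanishes on partial sums
  have hLP : ∀ N, L (P N) = 0 := by
    intro N
    have hPsum : P N = ∑ k ∈ Finset.range N, p.coeff k • (⟨fun z => z ^ k, continuous_pow k⟩ :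
        C(ℂ, ℂ)) := by
      ext z
      rw [ContinuousMap.sum_apply]
      show p.partialSum N z = _
      rw [FormalMultilinearSeries.partialSum]
      congr 1
      ext k
      rw [p.apply_eq_pow_smul_coeff]
      show z ^ k • p.coeff k = p.coeff k • z ^ k
      rw [smul_eq_mul, smul_eq_mul, mul_comm]
    rw [hPsum, map_sum]
    apply Finset.sum_eq_zero
    intro k _
    rw [map_smul, hmono k, smul_zero]
  -- partial sums tend to f in C(ℂ, ℂ)
  have hPtend : Tendsto P atTop (𝓝 fC) := by
    rw [ContinuousMap.tendsto_iff_forall_isCompact_tendstoUniformlyOn]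
    intro K' hK'
    obtain ⟨R₁, hR₁⟩ := hK'.isBounded.subset_closedBall 0
    set r' : NNReal := R₁.toNNReal + 1 with hr'
    have hsub : K' ⊆ Metric.ball (0 : ℂ) (r' : ℝ) := by
      intro z hz
      have := hR₁ hz
      rw [Metric.mem_closedBall, dist_zero_right] at this
      rw [Metric.mem_ball, dist_zero_right]
      calc ‖z‖ ≤ R₁ := this
        _ ≤ R₁.toNNReal := Real.le_coe_toNNReal R₁
        _ < (r' : ℝ) := by
            rw [hr']
            push_cast
            linarith
    have htu := hps.tendstoUniformlyOn (r' := r') (by simp)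
    have heq : (fun y => f (0 + y)) = f := by
      funext y
      rw [zero_add]
    rw [heq] at htu
    exact (htu.mono hsub)
  -- conclude
  have hLtend : Tendsto (fun N => L (P N)) atTop (𝓝 (L fC)) :=
    (L.continuous.tendsto fC).comp hPtend
  have : L fC = 0 := by
    apply tendsto_nhds_unique hLtend
    simp only [hLP]
    exact tendsto_const_nhds
  exact hLf this
end

section
/- Let X be a metrizable separable topological vector space and A, B ⊂ X with: A + B ⊂ A; A ∩ B = ∅; A ∪ {0} contains a vector subspace M with dim(M) = dim(X); and B ∪ {0} contains a dense vector subspace. Then A ∪ {0} contains a dense vector subspace of dimension dim(X). -/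
open Set Filter Topology

set_option maxHeartbeats 1000000 in
set_option synthInstance.maxHeartbeats 400000 in
/-- If `X` is a metrizable separable topological vector space, `A + B ⊆ A`,
`A ∩ B = ∅`, `A ∪ {0}` contains a subspace of full dimension, and `B ∪ {0}` contains a
dense subspace, then `A ∪ {0}` contains a dense subspace of full dimension
(i.e. `A` is maximal dense-lineable). -/
theorem stmt_10 {𝕜 X : Type*} [NontriviallyNormedField 𝕜] [AddCommGroup X] [Module 𝕜 X]
    [TopologicalSpace X] [IsTopologicalAddGroup X] [ContinuousSMul 𝕜 X]
    [TopologicalSpace.MetrizableSpace X] [TopologicalSpace.SeparableSpace X]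
    (A B : Set X)
    (hAB : ∀ a ∈ A, ∀ b ∈ B, a + b ∈ A)
    (hdisj : A ∩ B = ∅)
    (hA : ∃ M : Submodule 𝕜 X, Module.rank 𝕜 M = Module.rank 𝕜 X ∧
      (M : Set X) ⊆ A ∪ {0})
    (hB : ∃ N : Submodule 𝕜 X, Dense (N : Set X) ∧ (N : Set X) ⊆ B ∪ {0}) :
    ∃ M : Submodule 𝕜 X, Dense (M : Set X) ∧ Module.rank 𝕜 M = Module.rank 𝕜 X ∧
      (M : Set X) ⊆ A ∪ {0} := by
  classical
  obtain ⟨M, hMrank, hMA⟩ := hA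
  obtain ⟨N, hNdense, hNB⟩ := hB
  by_cases hfin : Module.rank 𝕜 X < Cardinal.aleph0
  · -- finite-dimensional case: M = ⊤ is already dense
    haveI : Module.Finite 𝕜 X := Module.rank_lt_aleph0_iff.mp hfin
    have hfr : Module.finrank 𝕜 M = Module.finrank 𝕜 X := by
      simp [Module.finrank, hMrank]
    have hMtop : M = ⊤ := Submodule.eq_top_of_finrank_eq hfr
    refine ⟨M, ?_, hMrank, hMA⟩
    rw [hMtop]
    simpa [Submodule.top_coe] using dense_univ
  push_neg at hfin
  -- set up the metric
  letI : MetricSpace X := TopologicalSpace.metrizableSpaceMetric X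
  haveI : SecondCountableTopology X := UniformSpace.secondCountable_of_separable X
  haveI : Nonempty X := ⟨0⟩
  -- M ∩ N = 0
  have hMN : ∀ x, x ∈ M → x ∈ N → x = 0 := by
    intro x hxM hxN
    by_contra hx
    rcases hMA hxM with h | h
    · rcases hNB hxN with h' | h'
      · have : x ∈ A ∩ B := ⟨h, h'⟩
        rw [hdisj] at this
        exact this
      · exact hx h'
    · exact hx h
  have hMNdisj : Disjoint M N := Submodule.disjoint_def.mpr hMN
  -- a basis of M, viewed in X
  let bM := Module.Basis.ofVectorSpace 𝕜 M
  let ι := Module.Basis.ofVectorSpaceIndex 𝕜 M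
  have hcard : Cardinal.mk ι = Module.rank 𝕜 X := by
    rw [← hMrank]; exact bM.mk_eq_rank''
  haveI : Infinite ι := Cardinal.infinite_iff.mpr (hcard ▸ hfin)
  let f : ℕ ↪ ι := Infinite.natEmbedding ι
  let e : ι → X := fun i => (bM i : X)
  have heM : ∀ i, e i ∈ M := fun i => (bM i).2
  have he : LinearIndependent 𝕜 e :=
    bM.linearIndependent.map' M.subtype (Submodule.ker_subtype M)
  -- a countable dense subset of N, enumerated as a sequence
  obtain ⟨T, hTN, hTc, hTd⟩ := hNdense.exists_countable_dense_subset
  obtain ⟨bs, hbs⟩ := hTc.exists_eq_range hTd.nonempty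
  have hbsN : ∀ n, bs n ∈ N := fun n => hTN (hbs ▸ Set.mem_range_self n)
  have hbsd : Dense (Set.range bs) := hbs ▸ hTd
  -- repeat each element infinitely often
  let b' : ℕ → X := fun n => bs n.unpair.1
  have hb'N : ∀ n, b' n ∈ N := fun n => hbsN _
  -- choose small nonzero scalars
  have hc : ∀ n : ℕ, ∃ cc : 𝕜, cc ≠ 0 ∧
      dist (cc • e (f n) + b' n) (b' n) < 1 / (n + 1) := by
    intro n
    have hcont : Filter.Tendsto (fun cc : 𝕜 => cc • e (f n) + b' n) (𝓝 0) (𝓝 (b' n)) := by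
      have h1 : Filter.Tendsto (fun cc : 𝕜 => cc • e (f n)) (𝓝 0) (𝓝 0) := by
        have := ((continuous_id.smul (continuous_const : Continuous fun _ : 𝕜 => e (f n)))).tendsto
          (0 : 𝕜)
        exact (by simpa using this : Filter.Tendsto ((id : 𝕜 → 𝕜) • fun _ : 𝕜 => e (f n)) (𝓝 0) (𝓝 0))
      have := h1.add_const (b' n)
      simpa using this
    have hpos : (0 : ℝ) < 1 / (n + 1) := by positivity
    have := (Metric.tendsto_nhds.mp hcont) (1 / (n + 1)) hpos
    rw [Metric.eventually_nhds_iff] at this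
    obtain ⟨δ, hδ, hδ'⟩ := this
    obtain ⟨cc, hcc0, hccδ⟩ := NormedField.exists_norm_lt 𝕜 hδ
    refine ⟨cc, by simpa using (ne_of_gt hcc0), hδ' ?_⟩
    simpa [dist_zero_right] using hccδ
  choose c hc0 hcd using hc
  -- the perturbed family
  let d : ι → 𝕜 := fun i => if i ∈ Set.range ⇑f then c (Function.invFun ⇑f i) else 1
  let β : ι → X := fun i => if i ∈ Set.range ⇑f then b' (Function.invFun ⇑f i) else 0
  let w : ι → X := fun i => d i • e i + β i
  have hd0 : ∀ i, d i ≠ 0 := by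
    intro i
    by_cases h : i ∈ Set.range ⇑f
    · simp only [d, if_pos h]; exact hc0 _
    · simp only [d, if_neg h]; exact one_ne_zero
  have hβN : ∀ i, β i ∈ N := by
    intro i
    by_cases h : i ∈ Set.range ⇑f
    · simp only [β, if_pos h]; exact hb'N _
    · simp only [β, if_neg h]; exact N.zero_mem
  let du : ι → 𝕜ˣ := fun i => Units.mk0 (d i) (hd0 i)
  have he' : LinearIndependent 𝕜 (fun i => d i • e i) := he.units_smul du
  -- linear independence of w via the quotient by N
  have hπe : LinearIndependent 𝕜 (⇑N.mkQ ∘ e) := by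
    apply he.map
    rw [Submodule.ker_mkQ]
    exact Disjoint.mono_left (Submodule.span_le.mpr (Set.range_subset_iff.mpr heM)) hMNdisj
  have hπw : (⇑N.mkQ ∘ w) = (fun i => d i • (⇑N.mkQ ∘ e) i) := by
    funext i
    have hβ0 : N.mkQ (β i) = 0 := by
      simpa using (Submodule.Quotient.mk_eq_zero N).mpr (hβN i)
    simp only [Function.comp_apply, w, map_add, map_smul, hβ0, add_zero]
  have hw : LinearIndependent 𝕜 w := by
    apply LinearIndependent.of_comp N.mkQ
    rw [hπw]
    exact hπe.units_smul du
  refine ⟨Submodule.span 𝕜 (Set.range w), ?_, ?_, ?_⟩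
  · -- density
    rw [dense_iff_closure_eq]
    have h1 : Set.range bs ⊆ closure ((Submodule.span 𝕜 (Set.range w) : Submodule 𝕜 X) : Set X) := by
      rintro _ ⟨k, rfl⟩
      have htend : Filter.Tendsto (fun m => w (f (Nat.pair k m))) Filter.atTop (𝓝 (bs k)) := by
        rw [tendsto_iff_dist_tendsto_zero]
        have hbound : ∀ m : ℕ, dist (w (f (Nat.pair k m))) (bs k) ≤ 1 / (m + 1 : ℝ) := by
          intro m
          set p := Nat.pair k m with hp
          have hfp : f p ∈ Set.range ⇑f := Set.mem_range_self p
          have hinv : Function.invFun ⇑f (f p) = p :=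
            Function.leftInverse_invFun f.injective p
          have hwfp : w (f p) = c p • e (f p) + b' p := by
            simp [w, d, β, hfp, hinv]
          have hbp : b' p = bs k := by
            simp [b', hp, Nat.unpair_pair]
          have h2 : dist (w (f p)) (bs k) < 1 / (p + 1) := by
            rw [hwfp, ← hbp]
            exact hcd p
          have h3 : (1 : ℝ) / (p + 1) ≤ 1 / (m + 1) := by
            apply one_div_le_one_div_of_le (by positivity)
            have := Nat.right_le_pair k m
            push_cast
            linarith [(Nat.cast_le (α := ℝ)).mpr this]
          exact le_trans h2.le h3
        exact squeeze_zero (fun m => dist_nonneg) hbound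
          tendsto_one_div_add_atTop_nhds_zero_nat
      exact mem_closure_of_tendsto htend
        (Filter.Eventually.of_forall fun m =>
          Submodule.subset_span (Set.mem_range_self _))
    have h2 := closure_mono h1
    rw [hbsd.closure_eq, closure_closure] at h2
    exact Set.eq_univ_of_univ_subset h2
  · -- rank
    rw [rank_span hw, Cardinal.mk_range_eq w hw.injective, hcard]
  · -- contained in A ∪ {0}
    intro x hx
    rcases eq_or_ne x 0 with rfl | hx0
    · exact Or.inr rfl
    obtain ⟨l, hl⟩ := Finsupp.mem_span_range_iff_exists_finsupp.mp hx
    set m := l.sum fun i a => a • (d i • e i) with hm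
    set bb := l.sum fun i a => a • β i with hbb
    have hx_eq : x = m + bb := by
      rw [← hl, hm, hbb, ← Finsupp.sum_add]
      refine Finsupp.sum_congr fun i _ => ?_
      simp [w, smul_add]
    have hmM : m ∈ M := by
      apply Submodule.finsuppSum_mem
      intro i _
      exact M.smul_mem _ (M.smul_mem _ (heM i))
    have hbbN : bb ∈ N := by
      apply Submodule.finsuppSum_mem
      intro i _
      exact N.smul_mem _ (hβN i)
    by_cases hbb0 : bb = 0
    · have hxM : x ∈ M := by rw [hx_eq, hbb0, add_zero]; exact hmM
      rcases hMA hxM with h | h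
      · exact Or.inl h
      · exact absurd h hx0
    · have hbbB : bb ∈ B := by
        rcases hNB hbbN with h | h
        · exact h
        · exact absurd h hbb0
      have hm0 : m ≠ 0 := by
        intro hm0
        apply hx0
        have hml : Finsupp.linearCombination 𝕜 (fun i => d i • e i) l = m := by
          rw [Finsupp.linearCombination_apply, hm]
        have hl0 : l = 0 := linearIndependent_iff.mp he' l (by rw [hml, hm0])
        rw [← hl, hl0, Finsupp.sum_zero_index]
      have hmA : m ∈ A := by
        rcases hMA hmM with h | h
        · exact h
        · exact absurd h hm0
      exact Or.inl (hx_eq ▸ hAB m hmA bb hbbB)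
end

section
/- If (m(n)) is a sequence of natural numbers with m(n) → ∞ and (c_n) are nonzero complex numbers such that m(n)·|c_n|^{p/m(n)} → ∞ for some fixed p ≥ 1, then (|c_n|^{p} · m(n)!)^{1/m(n)} → +∞ as n → ∞. -/
open Filter

/-- Key pointwise bound: for `M ≥ 1`, `(a^p * M!)^{1/M} ≥ a^{p/M} * M / e`. -/
lemma aux_bound (M p : ℕ) (hM : 1 ≤ M) (a : ℝ) (ha : 0 < a) :
    a ^ ((p : ℝ) / (M : ℝ)) * M / Real.exp 1 ≤
      (a ^ (p : ℝ) * (M.factorial : ℝ)) ^ ((1 : ℝ) / (M : ℝ)) := by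
  have hMpos : (0 : ℝ) < M := by exact_mod_cast hM
  set y : ℝ := a ^ ((p : ℝ) / (M : ℝ)) * M / Real.exp 1 with hy
  have hy0 : 0 ≤ y := by positivity
  have hfac : ((M : ℝ) / Real.exp 1) ^ M ≤ (M.factorial : ℝ) := by
    have h1 := Real.pow_div_factorial_le_exp (x := (M : ℝ)) (le_of_lt hMpos) M
    rw [div_le_iff₀ (by positivity)] at h1
    rw [div_pow, div_le_iff₀ (by positivity)]
    calc (M : ℝ) ^ M ≤ Real.exp (M : ℝ) * (M.factorial : ℝ) := h1
      _ = (M.factorial : ℝ) * Real.exp 1 ^ M := by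
          rw [← Real.exp_one_pow, mul_comm]
  have hpow : y ^ M ≤ a ^ (p : ℝ) * (M.factorial : ℝ) := by
    have : y ^ M = a ^ (p : ℝ) * ((M : ℝ) / Real.exp 1) ^ M := by
      rw [hy, mul_div_assoc, mul_pow, ← Real.rpow_natCast (a ^ ((p : ℝ) / (M : ℝ))) M,
        ← Real.rpow_mul (le_of_lt ha), div_mul_cancel₀ _ (ne_of_gt hMpos), div_pow]
    rw [this]
    exact mul_le_mul_of_nonneg_left hfac (by positivity)
  calc y = (y ^ M) ^ ((1 : ℝ) / (M : ℝ)) := by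
        rw [← Real.rpow_natCast y M, ← Real.rpow_mul hy0,
          mul_one_div, div_self (ne_of_gt hMpos), Real.rpow_one]
    _ ≤ (a ^ (p : ℝ) * (M.factorial : ℝ)) ^ ((1 : ℝ) / (M : ℝ)) :=
        Real.rpow_le_rpow (by positivity) hpow (by positivity)

/-- If `m n → ∞`, the `c n` are nonzero, `p ≥ 1`, and
`m n * |c n| ^ (p / m n) → ∞`, then `(|c n| ^ p * (m n)!) ^ (1 / m n) → +∞`. -/
theorem stmt_19 (m : ℕ → ℕ) (c : ℕ → ℂ) (p : ℕ) (hp : 1 ≤ p)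
    (hm : Tendsto m atTop atTop) (hc : ∀ n, c n ≠ 0)
    (h : Tendsto (fun n : ℕ =>
      (m n : ℝ) * ‖c n‖ ^ ((p : ℝ) / (m n : ℝ))) atTop atTop) :
    Tendsto (fun n : ℕ =>
      (‖c n‖ ^ (p : ℝ) * ((m n).factorial : ℝ)) ^ ((1 : ℝ) / (m n : ℝ)))
      atTop atTop := by
  have hexp : (0 : ℝ) < (Real.exp 1)⁻¹ := by positivity
  have h' : Tendsto (fun n : ℕ =>
      (Real.exp 1)⁻¹ * ((m n : ℝ) * ‖c n‖ ^ ((p : ℝ) / (m n : ℝ))))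
      atTop atTop := h.const_mul_atTop hexp
  refine tendsto_atTop_mono' atTop ?_ h'
  filter_upwards [hm.eventually_ge_atTop 1] with n hn
  have ha : 0 < ‖c n‖ := by
    simpa using (norm_pos_iff.mpr (hc n))
  have := aux_bound (m n) p hn (‖c n‖) ha
  calc (Real.exp 1)⁻¹ * ((m n : ℝ) * ‖c n‖ ^ ((p : ℝ) / (m n : ℝ)))
      = ‖c n‖ ^ ((p : ℝ) / (m n : ℝ)) * (m n) / Real.exp 1 := by ring
    _ ≤ _ := this
end
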